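/- Contraction bound: under the setting of the uniqueness theorem for the Stieltjes kernel, for any z = w + iv ∈ ℂ⁺, and with β_j(z,ν) = (1 + c cos(τν) K_j(z,ν))^{-1} and U_j(z,λ) = (2π)^{-1}∫₀^{2π} β_j(z,ν) cos(τν) h(λ,ν) dν, the product |β₁(z,ν) β₂(z,ν)| / (|U₁(z,λ) − z| · |U₂(z,λ) − z|) is bounded by C(v) = max{64 c² λ̄⁴ v^{-4}, 4 v^{-2}}. -/

import Mathlib

open Complex MeasureTheory Real Set

/-- `K` is, for each fixed `ν ∈ [0,2π]`, the Stieltjes transform of a positive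
measure with mass at most `λ̄²`, and is continuous in `ν`. -/
def IsStieltjesKernelMass (lamBar : ℝ) (K : ℂ → ℝ → ℂ) : Prop :=
  (∀ z : ℂ, 0 < z.im → ContinuousOn (fun ν => K z ν) (Icc (0:ℝ) (2 * π))) ∧
  (∀ ν ∈ Icc (0:ℝ) (2 * π), ∃ μ : Measure ℝ, IsFiniteMeasure μ ∧
    μ Set.univ ≤ ENNReal.ofReal (lamBar ^ 2) ∧
    ∀ z : ℂ, 0 < z.im → K z ν = ∫ σ : ℝ, ((σ : ℂ) - z)⁻¹ ∂μ)


lemma sub_ne' (z : ℂ) (hz : 0 < z.im) (σ : ℝ) : ((σ:ℂ) - z) ≠ 0 := by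
  intro h
  have h2 : ((σ:ℂ) - z).im = 0 := by rw [h]; simp
  simp [Complex.sub_im] at h2
  linarith

lemma norm_sub_ge' (z : ℂ) (hz : 0 < z.im) (σ : ℝ) : z.im ≤ ‖(σ:ℂ) - z‖ := by
  have h1 : |((σ:ℂ) - z).im| ≤ ‖(σ:ℂ) - z‖ := Complex.abs_im_le_norm _
  have h2 : ((σ:ℂ) - z).im = -z.im := by simp [Complex.sub_im]
  rw [h2, abs_neg, abs_of_pos hz] at h1
  exact h1

lemma stieltjes_facts (lamBar : ℝ) (z : ℂ) (hz : 0 < z.im)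
    (μ : Measure ℝ) [IsFiniteMeasure μ]
    (hμ : μ Set.univ ≤ ENNReal.ofReal (lamBar ^ 2))
    (K : ℂ) (hK : K = ∫ σ : ℝ, ((σ : ℂ) - z)⁻¹ ∂μ) :
    0 ≤ K.im ∧ ‖K‖ ≤ lamBar ^ 2 / z.im ∧
    ∀ t : ℝ, 0 < t →
      ‖K‖ ≤ t * lamBar ^ 2 / 2 + K.im / (2 * t * z.im) := by
  set g : ℝ → ℂ := fun σ => ((σ : ℂ) - z)⁻¹ with hg
  have hne : ∀ σ : ℝ, ((σ:ℂ) - z) ≠ 0 := sub_ne' z hz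
  have hcont : Continuous g := (Complex.continuous_ofReal.sub continuous_const).inv₀ hne
  have hbound : ∀ σ : ℝ, ‖g σ‖ ≤ z.im⁻¹ := by
    intro σ
    rw [hg]
    simp only [norm_inv]
    exact inv_anti₀ hz (norm_sub_ge' z hz σ)
  have hint : Integrable g μ :=
    (integrable_const (z.im⁻¹)).mono' hcont.aestronglyMeasurable (ae_of_all _ (by
      intro σ; exact hbound σ))
  have hintn : Integrable (fun σ => ‖g σ‖) μ := hint.norm
  have hintn2 : Integrable (fun σ => ‖g σ‖^2) μ := by
    refine (integrable_const (z.im⁻¹ ^ 2)).mono' ((hcont.norm.pow 2).aestronglyMeasurable) (ae_of_all _ ?_)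
    intro σ
    rw [Real.norm_eq_abs, _root_.abs_of_nonneg (by positivity : (0:ℝ) ≤ ‖g σ‖^2)]
    exact pow_le_pow_left₀ (norm_nonneg _) (hbound σ) 2
  have him : ∀ σ : ℝ, (g σ).im = z.im * ‖g σ‖^2 := by
    intro σ
    have e1 : ‖g σ‖^2 = (Complex.normSq ((σ:ℂ) - z))⁻¹ := by
      rw [hg]; simp only [norm_inv, inv_pow, Complex.sq_norm]
    rw [e1, hg]
    simp only [Complex.inv_im, Complex.sub_im, Complex.ofReal_im]
    ring
  have hKim : K.im = ∫ σ, (g σ).im ∂μ := by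
    rw [hK]
    exact (Complex.imCLM.integral_comp_comm hint).symm
  have hKim2 : K.im = z.im * ∫ σ, ‖g σ‖^2 ∂μ := by
    rw [hKim]
    simp_rw [him]
    rw [integral_const_mul]
  have hQ : 0 ≤ ∫ σ, ‖g σ‖^2 ∂μ := integral_nonneg fun σ => sq_nonneg _
  have hm : (μ Set.univ).toReal ≤ lamBar ^ 2 := by
    have h3 := ENNReal.toReal_mono ENNReal.ofReal_ne_top hμ
    rwa [ENNReal.toReal_ofReal (sq_nonneg _)] at h3
  have habsK : ‖K‖ ≤ ∫ σ, ‖g σ‖ ∂μ := by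
    rw [hK]
    exact norm_integral_le_integral_norm _
  refine ⟨by rw [hKim2]; exact mul_nonneg hz.le hQ, ?_, ?_⟩
  · calc ‖K‖ ≤ ∫ σ, ‖g σ‖ ∂μ := habsK
      _ ≤ ∫ _σ, z.im⁻¹ ∂μ := integral_mono hintn (integrable_const _) hbound
      _ = (μ Set.univ).toReal * z.im⁻¹ := by rw [integral_const, smul_eq_mul]; rfl
      _ ≤ lamBar ^ 2 / z.im := by
          rw [div_eq_mul_inv]
          exact mul_le_mul_of_nonneg_right hm (by positivity)
  · intro t ht
    have hptwise : ∀ σ, ‖g σ‖ ≤ t/2 + ‖g σ‖^2 / (2*t) := by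
      intro σ
      have h2t : (0:ℝ) < 2*t := by linarith
      rw [show t/2 + ‖g σ‖^2/(2*t) = (t^2 + ‖g σ‖^2)/(2*t) by field_simp,
        le_div_iff₀ h2t]
      nlinarith [sq_nonneg (t - ‖g σ‖)]
    have hQK : (∫ σ, ‖g σ‖^2 ∂μ) = K.im / z.im := by
      rw [hKim2]; field_simp
    calc ‖K‖ ≤ ∫ σ, ‖g σ‖ ∂μ := habsK
      _ ≤ ∫ σ, (t/2 + ‖g σ‖^2/(2*t)) ∂μ :=
          integral_mono hintn ((integrable_const _).add (hintn2.div_const _)) hptwise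
      _ = (μ Set.univ).toReal * (t/2) + (∫ σ, ‖g σ‖^2 ∂μ)/(2*t) := by
          rw [integral_add (integrable_const _) (hintn2.div_const _), integral_const,
            smul_eq_mul, integral_div]; rfl
      _ ≤ t * lamBar ^ 2 / 2 + K.im / (2 * t * z.im) := by
          rw [hQK]
          have e2 : K.im / z.im / (2*t) = K.im / (2*t*z.im) := by
            rw [div_div]; ring_nf
          rw [e2]
          have := mul_le_mul_of_nonneg_right hm (by positivity : (0:ℝ) ≤ t/2)
          linarith

lemma stieltjes_facts' (lamBar : ℝ) (K : ℂ → ℝ → ℂ) (h₁ : IsStieltjesKernelMass lamBar K)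
    (z : ℂ) (hz : 0 < z.im) (ν : ℝ) (hν : ν ∈ Icc (0:ℝ) (2*π)) :
    0 ≤ (K z ν).im ∧ ‖K z ν‖ ≤ lamBar ^ 2 / z.im ∧
    ∀ t : ℝ, 0 < t →
      ‖K z ν‖ ≤ t * lamBar ^ 2 / 2 + (K z ν).im / (2 * t * z.im) := by
  obtain ⟨μ, hfin, hμ, hKrep⟩ := h₁.2 ν hν
  haveI := hfin
  exact stieltjes_facts lamBar z hz μ hμ (K z ν) (hKrep z hz)

lemma beta_bound (τ : ℕ) (c lamBar : ℝ) (hc : 0 < c)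
    (K : ℂ → ℝ → ℂ) (h₁ : IsStieltjesKernelMass lamBar K)
    (z : ℂ) (hz : 0 < z.im) (ν : ℝ) (hν : ν ∈ Icc (0:ℝ) (2*π)) :
    ‖(1 + (c:ℂ) * ((Real.cos (τ*ν) : ℝ):ℂ) * K z ν)⁻¹‖
      ≤ max 2 (4*c*lamBar^2/z.im) := by
  obtain ⟨him, habs, hts⟩ := stieltjes_facts' lamBar K h₁ z hz ν hν
  set co : ℝ := Real.cos (τ*ν) with hco
  set D : ℂ := 1 + (c:ℂ) * ((co:ℝ):ℂ) * K z ν with hD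
  rw [norm_inv]
  rcases le_or_gt (1/2 : ℝ) (‖D‖) with hcase | hcase
  · refine le_trans ?_ (le_max_left _ _)
    rw [inv_le_comm₀ (lt_of_lt_of_le (by norm_num) hcase) (by norm_num)]
    linarith
  · -- bad case
    set κ : ℝ := ‖K z ν‖ with hκdef
    have ha : 1/2 < c * |co| * κ := by
      have e : ‖(c:ℂ) * ((co:ℝ):ℂ) * K z ν‖ = c * |co| * κ := by
        simp only [norm_mul, Complex.norm_real, Real.norm_eq_abs,
          _root_.abs_of_pos hc]
        rfl
      have tri : (1:ℝ) ≤ ‖D‖ + ‖(c:ℂ) * ((co:ℝ):ℂ) * K z ν‖ := by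
        have e2 : (1:ℂ) = D - (c:ℂ) * ((co:ℝ):ℂ) * K z ν := by rw [hD]; ring
        calc (1:ℝ) = ‖(1:ℂ)‖ := by simp
          _ = ‖D - (c:ℂ) * ((co:ℝ):ℂ) * K z ν‖ := by rw [← e2]
          _ ≤ ‖D‖ + ‖(c:ℂ) * ((co:ℝ):ℂ) * K z ν‖ := norm_sub_le _ _
      rw [e] at tri
      linarith
    have hκ0 : 0 ≤ κ := norm_nonneg _
    have hco0 : 0 < |co| := by
      rcases lt_or_ge 0 (|co|) with h' | h'
      · exact h'
      · exfalso; have h'' : |co| = 0 := le_antisymm h' (abs_nonneg _)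
        rw [h''] at ha; simp at ha; linarith
    have hlam0 : 0 < lamBar ^ 2 := by
      by_contra h'
      push_neg at h'
      have hκz : κ ≤ 0 := le_trans habs (div_nonpos_iff.mpr (Or.inr ⟨h', hz.le⟩))
      nlinarith [mul_nonneg hc.le (abs_nonneg co)]
    set γ : ℝ := c * |co| with hγ
    have hγ0 : 0 < γ := mul_pos hc hco0
    have hγc : γ ≤ c := by
      have : |co| ≤ 1 := by rw [hco]; exact Real.abs_cos_le_one _
      nlinarith
    have hκlb : 1/(2*γ) < κ := by
      rw [div_lt_iff₀ (by linarith)]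
      nlinarith
    have himD : γ * (K z ν).im ≤ ‖D‖ := by
      have hDim : D.im = (c * co) * (K z ν).im := by
        rw [hD]
        simp [Complex.add_im, Complex.mul_im, Complex.mul_re, Complex.ofReal_re,
          Complex.ofReal_im]
      have := Complex.abs_im_le_norm D
      rw [hDim, abs_mul, abs_mul, _root_.abs_of_pos hc,
        _root_.abs_of_nonneg him] at this
      exact this
    -- suffices z.im/(4*c*lamBar^2) ≤ abs D
    refine le_trans ?_ (le_max_right _ _)
    have hgoal : z.im/(4*c*lamBar^2) ≤ ‖D‖ := by
      by_contra hcon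
      push_neg at hcon
      have ht := hts (1/(2*γ*lamBar^2)) (by positivity)
      have e1 : (1/(2*γ*lamBar^2)) * lamBar^2/2 = 1/(4*γ) := by
        have hl0 : lamBar ≠ 0 := by rintro rfl; norm_num at hlam0
        field_simp; ring
      have e2 : (K z ν).im / (2*(1/(2*γ*lamBar^2))*z.im) = (K z ν).im * γ * lamBar^2 / z.im := by
        field_simp
      rw [e1, e2] at ht
      have e3 : (K z ν).im * γ * lamBar^2 / z.im < 1/(4*c) := by
        rw [div_lt_div_iff₀ hz (by positivity)]
        have h4 : γ * (K z ν).im < z.im/(4*c*lamBar^2) := lt_of_le_of_lt himD hcon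
        rw [lt_div_iff₀ (by positivity)] at h4
        nlinarith
      have e4 : 1/(4*c) ≤ 1/(4*γ) := by
        apply one_div_le_one_div_of_le (by linarith)
        linarith
      have : κ < 1/(2*γ) := by
        calc κ ≤ 1/(4*γ) + (K z ν).im * γ * lamBar^2 / z.im := ht
          _ < 1/(4*γ) + 1/(4*c) := by linarith
          _ ≤ 1/(4*γ) + 1/(4*γ) := by linarith
          _ = 1/(2*γ) := by field_simp; ring
      linarith
    rw [inv_le_comm₀ (lt_of_lt_of_le (by positivity) hgoal) (by positivity)]
    calc (4*c*lamBar^2/z.im)⁻¹ = z.im/(4*c*lamBar^2) := by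
          rw [inv_div]
      _ ≤ ‖D‖ := hgoal

lemma U_bound (m τ : ℕ) (c lamBar : ℝ) (hc : 0 < c)
    (h : (Fin m → ℝ) → ℝ → ℝ)
    (hrange : ∀ lam : Fin m → ℝ, ∀ ν ∈ Icc (0:ℝ) (2 * π),
      h lam ν ∈ Icc (0:ℝ) (lamBar ^ 2))
    (K : ℂ → ℝ → ℂ) (h₁ : IsStieltjesKernelMass lamBar K)
    (z : ℂ) (hz : 0 < z.im) (lam : Fin m → ℝ) :
    z.im ≤ ‖((((2 * π : ℝ) : ℂ)⁻¹ *
      ∫ ν' in (0:ℝ)..(2 * π),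
        (1 + (c : ℂ) * ((Real.cos (τ * ν') : ℝ) : ℂ) * K z ν')⁻¹ *
          ((Real.cos (τ * ν') * h lam ν' : ℝ) : ℂ)) - z)‖ := by
  set f : ℝ → ℂ := fun ν' =>
    (1 + (c : ℂ) * ((Real.cos (τ * ν') : ℝ) : ℂ) * K z ν')⁻¹ *
      ((Real.cos (τ * ν') * h lam ν' : ℝ) : ℂ) with hf
  have hptim : ∀ ν' ∈ Icc (0:ℝ) (2 * π), (f ν').im ≤ 0 := by
    intro ν' hν'
    have hKim : 0 ≤ (K z ν').im := (stieltjes_facts' lamBar K h₁ z hz ν' hν').1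
    have hh : 0 ≤ h lam ν' := (hrange lam ν' hν').1
    set D : ℂ := 1 + (c : ℂ) * ((Real.cos (τ * ν') : ℝ) : ℂ) * K z ν' with hD
    have hDim : D.im = (c * Real.cos (τ * ν')) * (K z ν').im := by
      rw [hD, Complex.add_im, Complex.one_im,
        show (c:ℂ) * ((Real.cos (τ * ν') : ℝ):ℂ) = (((c * Real.cos (τ * ν')) : ℝ) : ℂ) by
          push_cast; ring,
        Complex.mul_im]
      simp only [Complex.ofReal_re, Complex.ofReal_im, zero_mul, add_zero, zero_add]
    have e : (f ν').im = D⁻¹.im * (Real.cos (τ * ν') * h lam ν') := by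
      rw [hf]
      simp only
      rw [Complex.mul_im]
      simp only [Complex.ofReal_re, Complex.ofReal_im, mul_zero, zero_add]
      rfl
    rw [e, Complex.inv_im, hDim]
    have e2 : -((c * Real.cos (τ * ν')) * (K z ν').im) / Complex.normSq D *
        (Real.cos (τ * ν') * h lam ν')
        = -(c * (Real.cos (τ * ν'))^2 * (K z ν').im * h lam ν' / Complex.normSq D) := by
      ring
    rw [e2, neg_nonpos]
    apply div_nonneg _ (Complex.normSq_nonneg _)
    have := sq_nonneg (Real.cos (τ * ν'))
    positivity
  have hIim : (∫ ν' in (0:ℝ)..(2 * π), f ν').im ≤ 0 := by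
    by_cases hint : IntervalIntegrable f MeasureTheory.volume 0 (2 * π)
    · have hcc := Complex.imCLM.intervalIntegral_comp_comm hint
      simp only [Complex.imCLM_apply] at hcc
      rw [← hcc]
      have hneg : (0:ℝ) ≤ ∫ ν' in (0:ℝ)..(2 * π), (-(f ν').im) := by
        apply intervalIntegral.integral_nonneg (by positivity)
        intro u hu
        simpa using hptim u hu
      rw [intervalIntegral.integral_neg] at hneg
      linarith
    · rw [intervalIntegral.integral_undef hint]
      simp
  set W : ℂ := (((2 * π : ℝ) : ℂ)⁻¹ * ∫ ν' in (0:ℝ)..(2 * π), f ν') - z with hW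
  have hWim : W.im ≤ -z.im := by
    rw [hW, Complex.sub_im]
    have e : (((2 * π : ℝ) : ℂ)⁻¹ * ∫ ν' in (0:ℝ)..(2 * π), f ν').im
        = (2 * π : ℝ)⁻¹ * (∫ ν' in (0:ℝ)..(2 * π), f ν').im := by
      rw [← Complex.ofReal_inv]
      simp [Complex.mul_im, Complex.ofReal_re, Complex.ofReal_im]
    rw [e]
    have h2π : (0:ℝ) < (2 * π)⁻¹ := by positivity
    nlinarith
  calc z.im ≤ |W.im| := by rw [abs_of_neg (by linarith : W.im < 0)]; linarith
    _ ≤ ‖W‖ := Complex.abs_im_le_norm W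

/-- Contraction bound used in the uniqueness proof for the Stieltjes kernel:
with `β_j(z,ν) = (1 + c cos(τν) K_j(z,ν))⁻¹` and
`U_j(z,λ) = (2π)⁻¹ ∫₀^{2π} β_j(z,ν) cos(τν) h(λ,ν) dν`, the quantity
`|β₁(z,ν) β₂(z,ν)| / (|U₁(z,λ) − z| |U₂(z,λ) − z|)` is bounded by
`C(v) = max{64 c² λ̄⁴ v⁻⁴, 4 v⁻²}`, where `v = Im z`. -/
theorem stieltjes_kernel_contraction_bound
    (m τ : ℕ) (c lamBar : ℝ) (hc : 0 < c) (hlam : 0 ≤ lamBar)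
    (h : (Fin m → ℝ) → ℝ → ℝ)
    (hrange : ∀ lam : Fin m → ℝ, ∀ ν ∈ Icc (0:ℝ) (2 * π),
      h lam ν ∈ Icc (0:ℝ) (lamBar ^ 2))
    (K₁ K₂ : ℂ → ℝ → ℂ)
    (h₁ : IsStieltjesKernelMass lamBar K₁) (h₂ : IsStieltjesKernelMass lamBar K₂)
    (z : ℂ) (hz : 0 < z.im) (ν : ℝ) (hν : ν ∈ Icc (0:ℝ) (2 * π))
    (lam : Fin m → ℝ) :
    ‖((1 + (c : ℂ) * ((Real.cos (τ * ν) : ℝ) : ℂ) * K₁ z ν)⁻¹ *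
        (1 + (c : ℂ) * ((Real.cos (τ * ν) : ℝ) : ℂ) * K₂ z ν)⁻¹)‖ /
      (‖((((2 * π : ℝ) : ℂ)⁻¹ *
          ∫ ν' in (0:ℝ)..(2 * π),
            (1 + (c : ℂ) * ((Real.cos (τ * ν') : ℝ) : ℂ) * K₁ z ν')⁻¹ *
              ((Real.cos (τ * ν') * h lam ν' : ℝ) : ℂ)) - z)‖ *
        ‖((((2 * π : ℝ) : ℂ)⁻¹ *
          ∫ ν' in (0:ℝ)..(2 * π),
            (1 + (c : ℂ) * ((Real.cos (τ * ν') : ℝ) : ℂ) * K₂ z ν')⁻¹ *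
              ((Real.cos (τ * ν') * h lam ν' : ℝ) : ℂ)) - z)‖)
      ≤ max (64 * c ^ 2 * lamBar ^ 4 / z.im ^ 4) (4 / z.im ^ 2) := by
  have hb1 := beta_bound τ c lamBar hc K₁ h₁ z hz ν hν
  have hb2 := beta_bound τ c lamBar hc K₂ h₂ z hz ν hν
  have hU1 := U_bound m τ c lamBar hc h hrange K₁ h₁ z hz lam
  have hU2 := U_bound m τ c lamBar hc h hrange K₂ h₂ z hz lam
  have hM0 : (0:ℝ) ≤ max 2 (4*c*lamBar^2/z.im) := le_trans (by norm_num) (le_max_left _ _)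
  have hnum : ‖((1 + (c : ℂ) * ((Real.cos (τ * ν) : ℝ) : ℂ) * K₁ z ν)⁻¹ *
      (1 + (c : ℂ) * ((Real.cos (τ * ν) : ℝ) : ℂ) * K₂ z ν)⁻¹)‖
      ≤ max 2 (4*c*lamBar^2/z.im) * max 2 (4*c*lamBar^2/z.im) := by
    rw [norm_mul]
    exact mul_le_mul hb1 hb2 (norm_nonneg _) hM0
  have hden : z.im * z.im ≤ ‖((((2 * π : ℝ) : ℂ)⁻¹ *
          ∫ ν' in (0:ℝ)..(2 * π),
            (1 + (c : ℂ) * ((Real.cos (τ * ν') : ℝ) : ℂ) * K₁ z ν')⁻¹ *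
              ((Real.cos (τ * ν') * h lam ν' : ℝ) : ℂ)) - z)‖ *
        ‖((((2 * π : ℝ) : ℂ)⁻¹ *
          ∫ ν' in (0:ℝ)..(2 * π),
            (1 + (c : ℂ) * ((Real.cos (τ * ν') : ℝ) : ℂ) * K₂ z ν')⁻¹ *
              ((Real.cos (τ * ν') * h lam ν' : ℝ) : ℂ)) - z)‖ :=
    mul_le_mul hU1 hU2 hz.le (norm_nonneg _)
  refine le_trans (div_le_div₀ (mul_nonneg hM0 hM0) hnum (by positivity) hden) ?_
  rcases max_cases (2:ℝ) (4*c*lamBar^2/z.im) with ⟨hMe, hcase⟩ | ⟨hMe, hcase⟩ <;> rw [hMe]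
  · refine le_trans ?_ (le_max_right _ _)
    rw [show (2:ℝ)*2/(z.im*z.im) = 4/z.im^2 by ring]
  · refine le_trans ?_ (le_max_left _ _)
    rw [show (4*c*lamBar^2/z.im)*(4*c*lamBar^2/z.im)/(z.im*z.im)
        = 16*c^2*lamBar^4/z.im^4 by field_simp; ring]
    rw [div_le_div_iff₀ (by positivity) (by positivity)]
    nlinarith [sq_nonneg c, sq_nonneg (lamBar^2), pow_pos hz 4, sq_nonneg (c*lamBar^2),
      mul_pos (pow_pos hz 4) (pow_pos hz 4)]
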